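/- Let c, l, k be order-preserving bijections of ℝ such that c = k^q (q ≥ 1) and (c⁻¹)^{2s-2} ∘ l ∘ c ∘ l^s ∘ c ∘ l^s ∘ c ∘ l ∘ (c⁻¹)^{2s+9} = k^{-p} (with s ≥ 3, p ≥ 1). If x ∈ ℝ is a fixed point of k, then x is fixed by c, and if moreover x < l(x) or l(x) < x, a contradiction arises; hence any common fixed point of k is a common fixed point of both c and l. -/

import Mathlib

lemma fix_zpow (f : ℝ ≃o ℝ) (x : ℝ) (h : f x = x) : ∀ n : ℤ, (f ^ n) x = x := by
  have hinv : f⁻¹ x = x := by nth_rewrite 1 [← h]; exact f.symm_apply_apply x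
  intro n
  induction n using Int.induction_on with
  | zero => simp
  | succ n ih => rw [zpow_add_one]; show (f ^ (n:ℤ)) (f x) = x; rw [h, ih]
  | pred n ih => rw [zpow_sub_one]; show (f ^ (-n:ℤ)) (f⁻¹ x) = x; rw [hinv, ih]

lemma lt_pow (f : ℝ ≃o ℝ) (x : ℝ) (h : x < f x) : ∀ n : ℕ, 1 ≤ n → x < (f ^ n) x := by
  intro n hn
  induction n with
  | zero => omega
  | succ m ih =>
    rcases Nat.eq_or_lt_of_le hn with h1 | h1
    · simpa [← h1] using h
    · have hm := ih (by omega)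
      calc x < (f ^ m) x := hm
        _ < (f ^ m) (f x) := (f ^ m).strictMono h
        _ = (f ^ (m+1)) x := by rw [pow_succ]; rfl

lemma lt_zpow (f : ℝ ≃o ℝ) (x : ℝ) (h : x < f x) (n : ℤ) (hn : 1 ≤ n) :
    x < (f ^ n) x := by
  have : f ^ n = f ^ (n.toNat) := by rw [← zpow_natCast, Int.toNat_of_nonneg (by omega)]
  rw [this]
  exact lt_pow f x h n.toNat (by omega)

lemma step_lt (g : ℝ ≃o ℝ) {x y : ℝ} (hg : x ≤ g x) (h : x < y) : x < g y :=
  lt_of_le_of_lt hg (g.strictMono h)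

lemma step_gt (g : ℝ ≃o ℝ) {x y : ℝ} (hg : g x ≤ x) (h : y < x) : g y < x :=
  lt_of_lt_of_le (g.strictMono h) hg

/-- Let `c, l, k` be order-preserving bijections of `ℝ` with `c = k^q` (`q ≥ 1`) and
`c^{-(2s-2)} l c l^s c l^s c l c^{-(2s+9)} = k^{-p}` (`p ≥ 1`, `s ≥ 3`).  Then any fixed
point of `k` is a common fixed point of `c` and `l`. -/
theorem stmt3 (c l k : ℝ ≃o ℝ) (p q s : ℤ) (hp : 1 ≤ p) (hq : 1 ≤ q) (hs : 3 ≤ s)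
    (hc : c = k ^ q)
    (hrel : c ^ (-(2 * s - 2)) * l * c * l ^ s * c * l ^ s * c * l * c ^ (-(2 * s + 9))
      = k ^ (-p)) :
    ∀ x : ℝ, k x = x → c x = x ∧ l x = x := by
  intro x hk
  have hczn : ∀ n : ℤ, (c ^ n) x = x := by
    intro n
    rw [hc, ← zpow_mul]
    exact fix_zpow k x hk _
  have hcx : c x = x := by have := hczn 1; simpa using this
  refine ⟨hcx, ?_⟩
  have hFx : (c ^ (-(2 * s - 2)) * l * c * l ^ s * c * l ^ s * c * l * c ^ (-(2 * s + 9))) x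
      = x := by rw [hrel]; exact fix_zpow k x hk _
  have hF : (c ^ (-(2 * s - 2)) * l * c * l ^ s * c * l ^ s * c * l * c ^ (-(2 * s + 9))) x
      = (c ^ (-(2 * s - 2))) (l (c ((l ^ s) (c ((l ^ s) (c (l ((c ^ (-(2 * s + 9))) x)))))))) :=
    rfl
  rcases lt_trichotomy x (l x) with hl | hl | hl
  · exfalso
    have hls : x < (l ^ s) x := lt_zpow l x hl s (by omega)
    have h0 : (c ^ (-(2 * s + 9))) x = x := hczn _
    have chain : x < (c ^ (-(2 * s - 2))) (l (c ((l ^ s) (c ((l ^ s) (c (l ((c ^ (-(2 * s + 9))) x)))))))) := by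
      rw [h0]
      exact step_lt _ (hczn _).ge <| step_lt _ hl.le <| step_lt _ hcx.ge <|
        step_lt _ hls.le <| step_lt _ hcx.ge <| step_lt _ hls.le <| step_lt _ hcx.ge hl
    rw [← hF, hFx] at chain
    exact lt_irrefl x chain
  · exact hl.symm
  · exfalso
    have hlinv : x < l⁻¹ x := by
      show x < l.symm x
      have := l.symm.strictMono hl
      rwa [l.symm_apply_apply] at this
    have hls : (l ^ s) x < x := by
      have hinv : x < (l ^ s)⁻¹ x := by
        rw [← inv_zpow]; exact lt_zpow l⁻¹ x hlinv s (by omega)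
      calc (l ^ s) x < (l ^ s) ((l ^ s)⁻¹ x) := (l ^ s).strictMono hinv
        _ = (l ^ s * (l ^ s)⁻¹) x := rfl
        _ = x := by rw [mul_inv_cancel]; rfl
    have h0 : (c ^ (-(2 * s + 9))) x = x := hczn _
    have chain : (c ^ (-(2 * s - 2))) (l (c ((l ^ s) (c ((l ^ s) (c (l ((c ^ (-(2 * s + 9))) x)))))))) < x := by
      rw [h0]
      exact step_gt _ (hczn _).le <| step_gt _ hl.le <| step_gt _ hcx.le <|
        step_gt _ hls.le <| step_gt _ hcx.le <| step_gt _ hls.le <| step_gt _ hcx.le hl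
    rw [← hF, hFx] at chain
    exact lt_irrefl x chain
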